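/- Let V = ℂ³ with Hermitian form of signature (-,+,+) and let W ⊆ V be a real 2-dimensional subspace on which the form is real-valued with signature (-,+) (defining a geodesic G). Let u be a unit vector orthogonal to the complex span W + iW. Then for every nonzero x ∈ W and every unit complex number z, the real 3-dimensional subspace W + ℝ(z u) has real-valued Hermitian form of signature (-,+,+); i.e., every meridian of the bisector with real spine G is a real plane. -/

import Mathlib

/-- The Hermitian form of signature `(-,+,+)` on `ℂ³`. -/
noncomputable def herm (x y : Fin 3 → ℂ) : ℂ :=
  -(x 0 * star (y 0)) + x 1 * star (y 1) + x 2 * star (y 2)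

lemma herm_conj (x y : Fin 3 → ℂ) : herm y x = star (herm x y) := by
  simp [herm]; ring

lemma herm_smul_left (c : ℂ) (x y : Fin 3 → ℂ) :
    herm (c • x) y = c * herm x y := by
  simp [herm]; ring

lemma herm_smul_right (c : ℂ) (x y : Fin 3 → ℂ) :
    herm x (c • y) = star c * herm x y := by
  simp [herm]; ring

lemma herm_add_left (a b y : Fin 3 → ℂ) :
    herm (a + b) y = herm a y + herm b y := by
  simp [herm]; ring

lemma herm_add_right (x a b : Fin 3 → ℂ) :
    herm x (a + b) = herm x a + herm x b := by
  simp [herm]; ring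

lemma herm_rsmul_left (r : ℝ) (x y : Fin 3 → ℂ) :
    herm (r • x) y = (r : ℂ) * herm x y := by
  have : r • x = (r : ℂ) • x := by
    ext i; simp [Complex.real_smul]
  rw [this, herm_smul_left]

lemma herm_rsmul_right (r : ℝ) (x y : Fin 3 → ℂ) :
    herm x (r • y) = (r : ℂ) * herm x y := by
  have : r • y = (r : ℂ) • y := by
    ext i; simp [Complex.real_smul]
  rw [this, herm_smul_right]
  simp

lemma herm_zero_left (y : Fin 3 → ℂ) : herm 0 y = 0 := by simp [herm]

lemma herm_zero_right (x : Fin 3 → ℂ) : herm x 0 = 0 := by simp [herm]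

/-- Every meridian `W + ℝ(z u)` of a bisector is a real plane: the form is
real-valued on it, with signature `(-,+,+)`.  The real spine subspace `W` is
given by an orthonormal basis `w₁, w₂` with signs `-,+`, and `u` is a unit
vector orthogonal to `W + iW`. -/
theorem stmt_16 (w₁ w₂ u : Fin 3 → ℂ)
    (h11 : herm w₁ w₁ = -1) (h22 : herm w₂ w₂ = 1) (h12 : herm w₁ w₂ = 0)
    (huu : herm u u = 1) (hu1 : herm u w₁ = 0) (hu2 : herm u w₂ = 0)
    (z : ℂ) (hz : ‖z‖ = 1) :
    (∀ v w : Fin 3 → ℂ,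
      v ∈ Submodule.span ℝ ({w₁, w₂, z • u} : Set (Fin 3 → ℂ)) →
      w ∈ Submodule.span ℝ ({w₁, w₂, z • u} : Set (Fin 3 → ℂ)) →
      (herm v w).im = 0) ∧
    herm (z • u) (z • u) = 1 ∧ herm w₁ (z • u) = 0 ∧ herm w₂ (z • u) = 0 := by
  have hzz : herm (z • u) (z • u) = 1 := by
    rw [herm_smul_left, herm_smul_right, huu]
    have := Complex.mul_conj z
    rw [Complex.normSq_eq_norm_sq, hz] at this
    simp only [mul_one, Complex.star_def]
    rw [this]; norm_num
  have h1u : herm w₁ u = 0 := by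
    rw [herm_conj, hu1]; simp
  have h2u : herm w₂ u = 0 := by
    rw [herm_conj, hu2]; simp
  have h1z : herm w₁ (z • u) = 0 := by
    rw [herm_smul_right, h1u, mul_zero]
  have h2z : herm w₂ (z • u) = 0 := by
    rw [herm_smul_right, h2u, mul_zero]
  have h21 : herm w₂ w₁ = 0 := by rw [herm_conj, h12]; simp
  have hz1 : herm (z • u) w₁ = 0 := by rw [herm_smul_left, hu1, mul_zero]
  have hz2 : herm (z • u) w₂ = 0 := by rw [herm_smul_left, hu2, mul_zero]
  refine ⟨?_, hzz, h1z, h2z⟩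
  -- generators are pairwise real
  have hgen : ∀ g₁ ∈ ({w₁, w₂, z • u} : Set (Fin 3 → ℂ)),
      ∀ g₂ ∈ ({w₁, w₂, z • u} : Set (Fin 3 → ℂ)), (herm g₁ g₂).im = 0 := by
    rintro g₁ (rfl | rfl | rfl) g₂ (rfl | rfl | rfl) <;>
      simp_all [h11, h22, h12, h21, h1z, h2z, hz1, hz2, hzz]
  intro v w hv hw
  induction hv using Submodule.span_induction with
  | mem x hx =>
    induction hw using Submodule.span_induction with
    | mem y hy => exact hgen x hx y hy
    | zero => simp [herm_zero_right]
    | add a b _ _ ha hb => rw [herm_add_right]; simp [Complex.add_im, ha, hb]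
    | smul r a _ ha => rw [herm_rsmul_right]; simp [Complex.mul_im, ha]
  | zero => simp [herm_zero_left]
  | add a b _ _ ha hb => rw [herm_add_left]; simp [Complex.add_im, ha, hb]
  | smul r a _ ha => rw [herm_rsmul_left]; simp [Complex.mul_im, ha]
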